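/- Let E be a finite-dimensional vector space of dimension n over a field K, with dual E*. Denote by ⊣ the contraction pairing Λᵃ E × Λᵇ E* → Λ^{b−a} E* (for a ≤ b) determined by extending the single-vector contraction, and analogously Λᵃ E* × Λᵇ E → Λ^{b−a} E. Then for every v ∈ Λᵃ E*, w ∈ Λᵇ E, and Ω ∈ Λⁿ E* with a ≤ b: v ∧ (w ⊣ Ω) = (v ⊣ w) ⊣ Ω, where on the left w ⊣ Ω ∈ Λ^{n−b} E*, and on the right v ⊣ w ∈ Λ^{b−a} E is contracted into Ω producing an element of Λ^{n−b+a} E*. -/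
import Mathlib


section Contractions

variable (K E : Type*) [Field K] [AddCommGroup E] [Module K E]

/-- Contraction of the exterior algebra of the dual by a vector `v ∈ E`. -/
noncomputable def contractByVec :
    E →ₗ[K] Module.End K (ExteriorAlgebra K (Module.Dual K E)) :=
  (CliffordAlgebra.contractLeft
    (Q := (0 : QuadraticForm K (Module.Dual K E)))).comp (Module.Dual.eval K E)

theorem contractByVec_sq (v : E) : contractByVec K E v * contractByVec K E v = 0 :=
  LinearMap.ext fun x => CliffordAlgebra.contractLeft_contractLeft _ x

/-- Contraction of the exterior algebra of `E` by a covector `ξ ∈ E*`. -/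
noncomputable def contractByDual :
    Module.Dual K E →ₗ[K] Module.End K (ExteriorAlgebra K E) :=
  CliffordAlgebra.contractLeft (Q := (0 : QuadraticForm K E))

theorem contractByDual_sq (ξ : Module.Dual K E) :
    contractByDual K E ξ * contractByDual K E ξ = 0 :=
  LinearMap.ext fun x => CliffordAlgebra.contractLeft_contractLeft _ x

/-- The contraction `w ⊣ (·) : Λ E* → Λ E*` by an element `w` of `Λ E`, as an algebra map
`Λ E → End(Λ E*)` extending the single-vector contraction (so that
`(v ∧ w) ⊣ z = v ⊣ (w ⊣ z)`). -/
noncomputable def extContract :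
    ExteriorAlgebra K E →ₐ[K] Module.End K (ExteriorAlgebra K (Module.Dual K E)) :=
  ExteriorAlgebra.lift K ⟨contractByVec K E, contractByVec_sq K E⟩

/-- The contraction `ξ ⊣ (·) : Λ E → Λ E` by an element `ξ` of `Λ E*`, as an algebra map
`Λ E* → End(Λ E)`. -/
noncomputable def extContractDual :
    ExteriorAlgebra K (Module.Dual K E) →ₐ[K] Module.End K (ExteriorAlgebra K E) :=
  ExteriorAlgebra.lift K ⟨contractByDual K E, contractByDual_sq K E⟩

end Contractions

set_option maxHeartbeats 1000000
set_option synthInstance.maxHeartbeats 400000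

section Aux

variable {K E : Type*} [Field K] [AddCommGroup E] [Module K E]

open CliffordAlgebra

lemma extContract_algebraMap' (r : K) (Z : ExteriorAlgebra K (Module.Dual K E)) :
    extContract K E (algebraMap K (ExteriorAlgebra K E) r) Z = r • Z := by
  rw [AlgHom.commutes, Module.algebraMap_end_apply]

lemma extContract_ι' (u : E) :
    extContract K E (CliffordAlgebra.ι (0 : QuadraticForm K E) u) =
      CliffordAlgebra.contractLeft (Q := (0 : QuadraticForm K (Module.Dual K E)))
        (Module.Dual.eval K E u) :=
  ExteriorAlgebra.lift_ι_apply _ _ _ u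

lemma extContractDual_ι' (ξ : Module.Dual K E) :
    extContractDual K E (CliffordAlgebra.ι (0 : QuadraticForm K (Module.Dual K E)) ξ) =
      CliffordAlgebra.contractLeft (Q := (0 : QuadraticForm K E)) ξ :=
  ExteriorAlgebra.lift_ι_apply _ _ _ ξ

/-- Contraction by a covector is a super-derivation (`involute` form). -/
lemma ext_contractLeft_mul {M : Type*} [AddCommGroup M] [Module K M]
    (d : Module.Dual K M) (x y : ExteriorAlgebra K M) :
    CliffordAlgebra.contractLeft (Q := (0 : QuadraticForm K M)) d (x * y) =
      CliffordAlgebra.contractLeft (Q := (0 : QuadraticForm K M)) d x * y +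
        CliffordAlgebra.involute x *
          CliffordAlgebra.contractLeft (Q := (0 : QuadraticForm K M)) d y := by
  induction x using CliffordAlgebra.induction generalizing y with
  | algebraMap r =>
      rw [contractLeft_algebraMap_mul, contractLeft_algebraMap, zero_mul, zero_add,
        AlgHom.commutes]
  | ι u =>
      rw [contractLeft_ι_mul, contractLeft_ι, involute_ι, neg_mul, Algebra.smul_def,
        sub_eq_add_neg]
  | mul x₁ x₂ h1 h2 =>
      rw [mul_assoc, h1, h2, h1, map_mul]
      noncomm_ring
  | add x₁ x₂ h1 h2 =>
      simp only [add_mul, map_add, h1, h2, LinearMap.add_apply]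
      abel

/-- Key commutation identity between left multiplication by `ι ξ` and contraction by `x`. -/
lemma extContract_comm (ξ : Module.Dual K E) (x : ExteriorAlgebra K E)
    (Z : ExteriorAlgebra K (Module.Dual K E)) :
    CliffordAlgebra.ι (0 : QuadraticForm K (Module.Dual K E)) ξ * extContract K E x Z =
      extContract K E
          (CliffordAlgebra.contractLeft (Q := (0 : QuadraticForm K E)) ξ x) Z +
        extContract K E (CliffordAlgebra.involute x)
          (CliffordAlgebra.ι (0 : QuadraticForm K (Module.Dual K E)) ξ * Z) := by
  induction x using CliffordAlgebra.induction generalizing Z with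
  | algebraMap r =>
      rw [contractLeft_algebraMap, map_zero, LinearMap.zero_apply, zero_add,
        AlgHom.commutes (CliffordAlgebra.involute), extContract_algebraMap',
        extContract_algebraMap', mul_smul_comm]
  | ι u =>
      have key := CliffordAlgebra.contractLeft_ι_mul
        (Q := (0 : QuadraticForm K (Module.Dual K E))) (d := Module.Dual.eval K E u) ξ Z
      rw [extContract_ι', contractLeft_ι, involute_ι, map_neg, LinearMap.neg_apply,
        extContract_ι', extContract_algebraMap', key, Module.Dual.eval_apply]
      abel
  | mul x₁ x₂ h1 h2 =>
      simp only [map_mul, Module.End.mul_apply, h1, h2, ext_contractLeft_mul, map_add,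
        LinearMap.add_apply, LinearMap.map_add]
      abel
  | add x₁ x₂ h1 h2 =>
      simp only [map_add, LinearMap.add_apply, mul_add, h1, h2]
      abel

/-- Multiplying a top-degree form by `ι ξ` gives zero. -/
lemma ι_mul_top [FiniteDimensional K E] (ξ : Module.Dual K E)
    (Ω : ExteriorAlgebra K (Module.Dual K E))
    (hΩ : Ω ∈ ⋀[K]^(Module.finrank K E) (Module.Dual K E)) :
    CliffordAlgebra.ι (0 : QuadraticForm K (Module.Dual K E)) ξ * Ω = 0 := by
  set n := Module.finrank K E with hn
  rw [← ExteriorAlgebra.ιMulti_span_fixedDegree] at hΩ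
  induction hΩ using Submodule.span_induction with
  | mem x hx =>
      obtain ⟨v, rfl⟩ := hx
      have hmul : CliffordAlgebra.ι (0 : QuadraticForm K (Module.Dual K E)) ξ *
            ExteriorAlgebra.ιMulti K n v
          = ExteriorAlgebra.ιMulti K (n + 1) (Fin.cons ξ v) := by
        have htail : Matrix.vecTail (Fin.cons ξ v) = v := by
          ext i
          simp [Matrix.vecTail]
        rw [ExteriorAlgebra.ιMulti_succ_apply, Fin.cons_zero, htail]
      rw [hmul]
      apply AlternatingMap.map_linearDependent
      intro h
      have hcard := h.fintype_card_le_finrank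
      rw [Fintype.card_fin, Subspace.dual_finrank_eq] at hcard
      omega
  | zero => simp
  | add x y _ _ hx hy => rw [mul_add, hx, hy, add_zero]
  | smul r x _ hx => rw [mul_smul_comm, hx, smul_zero]

end Aux

/-- For `v ∈ Λᵃ E*`, `w ∈ Λᵇ E`, `Ω ∈ Λⁿ E*` with `a ≤ b` and `n = dim E`:
`v ∧ (w ⊣ Ω) = (v ⊣ w) ⊣ Ω`. -/
theorem wedge_contract_eq_contract_contract {K E : Type*} [Field K] [AddCommGroup E]
    [Module K E] [FiniteDimensional K E] (a b : ℕ) (hab : a ≤ b)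
    (v : ExteriorAlgebra K (Module.Dual K E)) (hv : v ∈ ⋀[K]^a (Module.Dual K E))
    (w : ExteriorAlgebra K E) (hw : w ∈ ⋀[K]^b E)
    (Ω : ExteriorAlgebra K (Module.Dual K E))
    (hΩ : Ω ∈ ⋀[K]^(Module.finrank K E) (Module.Dual K E)) :
    v * extContract K E w Ω = extContract K E (extContractDual K E v w) Ω := by
  clear hab hv hw
  induction v using CliffordAlgebra.induction generalizing w with
  | algebraMap r =>
      have hD : extContractDual K E (algebraMap K _ r) w = r • w := by
        rw [AlgHom.commutes, Module.algebraMap_end_apply]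
      rw [hD, map_smul, LinearMap.smul_apply, Algebra.smul_def]
  | ι ξ =>
      rw [extContractDual_ι', extContract_comm, ι_mul_top ξ Ω hΩ, map_zero, add_zero]
  | mul v₁ v₂ h1 h2 =>
      rw [mul_assoc, h2, h1, map_mul, Module.End.mul_apply]
  | add v₁ v₂ h1 h2 =>
      simp only [add_mul, map_add, LinearMap.add_apply, h1, h2]
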